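/- Let F_q be a finite field of characteristic 2, a, b ∈ F_q with b ≠ 0, and n ≥ 2 an integer. Write n+1 = 2^r·(m+1) with r ≥ 1 and m+1 odd. Then m is even, and: (i) if m > 0, the code Ĉ_n(a,b) with generator matrix (I_n | T̂_n(a,b)) is LCD — equivalently, I_n + T̂_n(a,b)² is invertible — if and only if a/b ∉ {−1/b} ∪ { −1/b + θ^i + θ^{−i} : 1 ≤ i ≤ m/2 }, where θ is a primitive (m+1)-th root of unity in an algebraic closure of F_q and F_q is identified with its image in the closure; (ii) if m = 0, Ĉ_n(a,b) is LCD if and only if a ≠ 1. -/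
import Mathlib


/-- The `n × n` tridiagonal Toeplitz matrix with diagonal entries `a` and
sub/super-diagonal entries `b`. -/
def triToeplitz (F : Type*) [Field F] (n : ℕ) (a b : F) :
    Matrix (Fin n) (Fin n) F :=
  Matrix.of fun i j =>
    if (i : ℕ) = (j : ℕ) then a
    else if (i : ℕ) + 1 = (j : ℕ) ∨ (j : ℕ) + 1 = (i : ℕ) then b
    else 0


def pseq {F : Type*} [Field F] (c : F) : ℕ → F
  | 0 => 1
  | 1 => c
  | (k+2) => c * pseq c (k+1) + pseq c k

section
variable {F : Type*} [Field F]

def vext {n : ℕ} (v : Fin n → F) (k : ℕ) : F :=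
  if h : k < n then v ⟨k, h⟩ else 0

lemma mulVec_tri {n : ℕ} (α b : F) (v : Fin n → F) (i : Fin n) :
    (triToeplitz F n α b).mulVec v i
      = α * v i + (if (i:ℕ) = 0 then 0 else b * vext v ((i:ℕ) - 1)) + b * vext v ((i:ℕ)+1) := by
  classical
  have hsplit : ∀ j : Fin n, triToeplitz F n α b i j * v j
      = (if j = i then α * v j else 0)
        + (if (j:ℕ) + 1 = (i:ℕ) then b * v j else 0)
        + (if (i:ℕ) + 1 = (j:ℕ) then b * v j else 0) := by
    intro j
    have hval : (j = i) ↔ ((j:ℕ) = (i:ℕ)) := by simp [Fin.ext_iff]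
    simp only [triToeplitz, Matrix.of_apply]
    by_cases h1 : (i:ℕ) = (j:ℕ)
    · rw [if_pos h1, if_pos (hval.mpr h1.symm), if_neg (by omega), if_neg (by omega)]; ring
    · rw [if_neg h1]
      have hji : ¬ j = i := by rw [hval]; omega
      by_cases h2 : (j:ℕ)+1 = (i:ℕ)
      · rw [if_pos (Or.inr h2), if_neg hji, if_pos h2, if_neg (by omega)]; ring
      · by_cases h3 : (i:ℕ)+1 = (j:ℕ)
        · rw [if_pos (Or.inl h3), if_neg hji, if_neg h2, if_pos h3]; ring
        · rw [if_neg (by tauto), if_neg hji, if_neg h2, if_neg h3]; ring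
  unfold Matrix.mulVec dotProduct
  simp only [hsplit, Finset.sum_add_distrib]
  congr 1
  · congr 1
    · simp [Finset.sum_ite_eq]
    · by_cases h0 : (i:ℕ) = 0
      · rw [if_pos h0, Finset.sum_eq_zero]
        intro j _
        rw [if_neg (by omega)]
      · rw [if_neg h0]
        have hlt : (i:ℕ) - 1 < n := by omega
        rw [show (fun j : Fin n => if (j:ℕ) + 1 = (i:ℕ) then b * v j else 0)
            = (fun j : Fin n => if j = ⟨(i:ℕ)-1, hlt⟩ then b * v j else 0) from
          funext fun j => if_congr (by simp only [Fin.ext_iff]; omega) rfl rfl]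
        rw [Finset.sum_ite_eq' Finset.univ]
        simp [vext, hlt]
  · rcases Nat.lt_or_ge ((i:ℕ)+1) n with hlt | hge
    · rw [show (fun j : Fin n => if (i:ℕ) + 1 = (j:ℕ) then b * v j else 0)
          = (fun j : Fin n => if j = ⟨(i:ℕ)+1, hlt⟩ then b * v j else 0) from
        funext fun j => if_congr (by simp only [Fin.ext_iff]; omega) rfl rfl]
      rw [Finset.sum_ite_eq' Finset.univ]
      simp [vext, hlt]
    · rw [Finset.sum_eq_zero, vext, dif_neg (by omega), mul_zero]
      intro j _
      rw [if_neg (by omega)]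
end

section
variable {E : Type*} [Field E] [CharP E 2]

lemma exists_kernel_iff {n : ℕ} (hn : 2 ≤ n) (α b : E) (hb : b ≠ 0) :
    (∃ v ≠ 0, (triToeplitz E n α b).mulVec v = 0) ↔ pseq (α/b) n = 0 := by
  classical
  obtain ⟨k, rfl⟩ : ∃ k, n = k + 2 := ⟨n - 2, by omega⟩
  have h2 : (2 : E) = 0 := by
    have := CharP.cast_eq_zero E 2
    exact_mod_cast this
  obtain ⟨c, rfl⟩ : ∃ c, α = b * c := ⟨α / b, by field_simp⟩
  rw [show b * c / b = c by field_simp]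
  constructor
  · rintro ⟨v, hv0, hMv⟩
    set V : ℕ → E := vext v with hV
    have hVlt : ∀ m (h : m < k+2), V m = v ⟨m, h⟩ := by
      intro m h; simp [hV, vext, h]
    have hVge : ∀ m, k+2 ≤ m → V m = 0 := by
      intro m h; simp [hV, vext, Nat.not_lt.mpr h]
    have hrow : ∀ t (h : t < k+2),
        (b*c) * V t + (if t = 0 then 0 else b * V (t-1)) + b * V (t+1) = 0 := by
      intro t h
      have := congrFun hMv ⟨t, h⟩
      rw [mulVec_tri] at this
      rw [hVlt t h]
      simpa [hV] using this
    have key : ∀ m, m < k+2 → V m = V 0 * pseq c m := by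
      intro m
      induction m using Nat.strong_induction_on with
      | _ m ih =>
        match m with
        | 0 => intro _; simp [pseq]
        | 1 =>
          intro h1
          have h := hrow 0 (by omega)
          rw [if_pos rfl] at h
          norm_num at h
          apply mul_left_cancel₀ hb
          simp only [pseq]
          linear_combination h - b * c * V 0 * h2
        | (m+2) =>
          intro hlt
          have hR := hrow (m+1) (by omega)
          rw [if_neg (by omega)] at hR
          norm_num at hR
          have ih1 := ih (m+1) (by omega) (by omega)
          have ih2 := ih m (by omega) (by omega)
          apply mul_left_cancel₀ hb
          simp only [pseq]
          linear_combination hR - b*c*ih1 - b*ih2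
            - (b*c*V 0*pseq c (m+1) + b*V 0*pseq c m) * h2
    have hV0 : V 0 ≠ 0 := by
      intro h0
      apply hv0
      funext i
      have hz := key (i:ℕ) i.isLt
      rw [h0, zero_mul] at hz
      have h3 := hVlt (i:ℕ) i.isLt
      simp only [Fin.eta] at h3
      rw [Pi.zero_apply, ← h3]
      exact hz
    have hR := hrow (k+1) (by omega)
    rw [if_neg (by omega), hVge (k+2) (by omega), mul_zero, add_zero,
        Nat.add_sub_cancel, key (k+1) (by omega), key k (by omega)] at hR
    have hb2 : b * pseq c (k+2) = 0 := by
      have hfac : V 0 * ((b*c) * pseq c (k+1) + b * pseq c k) = 0 := by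
        linear_combination hR
      have hz := (mul_eq_zero.mp hfac).resolve_left hV0
      simp only [pseq]
      linear_combination hz
    exact (mul_eq_zero.mp hb2).resolve_left hb
  · intro hp
    refine ⟨fun i => pseq c (i:ℕ), ?_, ?_⟩
    · intro h
      have := congrFun h ⟨0, by omega⟩
      simp [pseq] at this
    · funext i
      rw [mulVec_tri]
      have hvext : ∀ t, vext (fun i : Fin (k+2) => pseq c (i:ℕ)) t
          = if h : t < k+2 then pseq c t else 0 := by
        intro t; simp [vext]
      have hi := i.isLt
      simp only [Pi.zero_apply, hvext]
      rcases Nat.eq_zero_or_pos (i:ℕ) with h0 | h0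
      · rw [if_pos h0, h0, dif_pos (by omega : 0 + 1 < k + 2)]
        norm_num [pseq]
        linear_combination b * c * h2
      · obtain ⟨s, hs⟩ : ∃ s, (i:ℕ) = s + 1 := ⟨(i:ℕ)-1, by omega⟩
        rw [hs, if_neg (by omega), Nat.add_sub_cancel]
        rcases Nat.lt_or_ge (s+2) (k+2) with hlt | hge
        · rw [dif_pos (by omega : s < k+2), dif_pos (show s+1+1 < k+2 by omega)]
          have hps : pseq c (s+1+1) = c * pseq c (s+1) + pseq c s := rfl
          rw [hps]
          linear_combination (b*c*pseq c (s+1) + b*pseq c s) * h2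
        · have hsk : s = k := by omega
          rw [hsk, dif_pos (by omega : k < k+2), dif_neg (by omega : ¬ (k+1+1 < k+2)),
            mul_zero, add_zero]
          have hps : pseq c (k+2) = c * pseq c (k+1) + pseq c k := rfl
          rw [hps] at hp
          linear_combination b * hp
end

lemma pseq_map {F K : Type*} [Field F] [Field K] (f : F →+* K) (c : F) :
    ∀ k, f (pseq c k) = pseq (f c) k
  | 0 => by simp [pseq]
  | 1 => by simp [pseq]
  | (k+2) => by
      simp only [pseq, map_add, map_mul, pseq_map f c (k+1), pseq_map f c k]

section
variable {K : Type*} [Field K] [CharP K 2]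

lemma char2K : (2 : K) = 0 := by
  have := CharP.cast_eq_zero K 2
  exact_mod_cast this

lemma pseq_zero {k : ℕ} (hk : Odd k) : pseq (0 : K) k = 0 := by
  suffices h : ∀ j k, k ≤ 2 * j → Odd k → pseq (0 : K) k = 0 by
    exact h k k (by omega) hk
  intro j
  induction j with
  | zero => intro k h hk; exfalso; rcases hk with ⟨t, ht⟩; omega
  | succ j ih =>
    intro k h hk
    match k, hk with
    | 1, _ => simp [pseq]
    | (k+2), hk =>
      have : pseq (0:K) (k+2) = 0 * pseq 0 (k+1) + pseq 0 k := rfl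
      rw [this, zero_mul, zero_add]
      exact ih k (by omega) (by rcases hk with ⟨t, ht⟩; exact ⟨t-1, by omega⟩)

lemma sq_eq_one_char2 {t : K} (h : t^2 = 1) : t = 1 := by
  have h2 : (2:K) = 0 := char2K
  have : (t - 1)^2 = 0 := by linear_combination h + (1 - t) * h2
  have ht := pow_eq_zero_iff (n := 2) (by norm_num) |>.mp this
  linear_combination ht

end

section
variable {K : Type*} [Field K] [CharP K 2]

lemma pow_two_pow_eq_one_char2 {t : K} (r : ℕ) (h : t ^ (2^r) = 1) : t = 1 := by
  induction r with
  | zero => simpa using h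
  | succ r ih =>
    apply ih
    apply sq_eq_one_char2
    rw [← pow_mul, show 2^r * 2 = 2^(r+1) from (pow_succ 2 r).symm]
    exact h

lemma pseq_key (x : K) (hx : x ≠ 0) :
    ∀ k, (x + x⁻¹) * pseq (x + x⁻¹) k = x^(k+1) + (x⁻¹)^(k+1)
  | 0 => by simp [pseq]
  | 1 => by
      have h2 : (2:K) = 0 := char2K
      have hxy : x * x⁻¹ = 1 := mul_inv_cancel₀ hx
      have : pseq (x + x⁻¹) 1 = x + x⁻¹ := rfl
      rw [this]
      linear_combination 2 * hxy + h2
  | (k+2) => by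
      have h2 : (2:K) = 0 := char2K
      have hxy : x * x⁻¹ = 1 := mul_inv_cancel₀ hx
      have ih1 := pseq_key x hx (k+1)
      have ih2 := pseq_key x hx k
      have hps : pseq (x + x⁻¹) (k+2)
          = (x + x⁻¹) * pseq (x + x⁻¹) (k+1) + pseq (x + x⁻¹) k := rfl
      rw [hps]
      linear_combination (x + x⁻¹) * ih1 + ih2
        + (x^(k+1) + x⁻¹^(k+1)) * hxy + (x^(k+1) + x⁻¹^(k+1)) * h2
end

section
variable {K : Type*} [Field K] [IsAlgClosed K] [CharP K 2]

lemma pseq_root_iff (n m r : ℕ) (hr : 1 ≤ r) (hnm : n + 1 = 2^r * (m+1))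
    (hm : Odd (m+1)) (θ : K) (hθ : IsPrimitiveRoot θ (m+1)) (c : K) :
    pseq c n = 0 ↔ c = 0 ∨ ∃ i, 1 ≤ i ∧ i ≤ m/2 ∧ c = θ^i + (θ^i)⁻¹ := by
  have h2 : (2:K) = 0 := char2K
  obtain ⟨t, ht⟩ := hm
  have hnodd : Odd n := by
    have h1 : 2 ∣ n + 1 := by
      rw [hnm]; exact Dvd.dvd.mul_right (dvd_pow_self 2 (by omega)) _
    rcases h1 with ⟨s, hs⟩; exact ⟨s-1, by omega⟩
  constructor
  · intro hp
    by_cases hc : c = 0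
    · exact Or.inl hc
    right
    obtain ⟨x, hx⟩ := IsAlgClosed.exists_root
      (Polynomial.X^2 + Polynomial.C c * Polynomial.X + 1)
      (by
        have hdeg : (Polynomial.X^2 + Polynomial.C c * Polynomial.X
            + 1 : Polynomial K).degree = 2 := by compute_degree!
        rw [hdeg]; norm_num)
    have hx' : x^2 + c*x + 1 = 0 := by
      have := hx
      simp only [Polynomial.IsRoot, Polynomial.eval_add, Polynomial.eval_pow,
        Polynomial.eval_mul, Polynomial.eval_X, Polynomial.eval_C,
        Polynomial.eval_one] at this
      exact this
    have hx0 : x ≠ 0 := by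
      intro h; rw [h] at hx'; norm_num at hx'
    have hxy : x * x⁻¹ = 1 := mul_inv_cancel₀ hx0
    have hxc : x + x⁻¹ = c := by
      apply mul_left_cancel₀ hx0
      linear_combination hx' + hxy - c*x*h2
    have hkey := pseq_key x hx0 n
    rw [hxc, hp, mul_zero] at hkey
    have hinv : x^(n+1) * (x⁻¹)^(n+1) = 1 := by rw [← mul_pow, hxy, one_pow]
    have hpow : (x^(n+1))^2 = 1 := by
      linear_combination (-(x^(n+1))) * hkey + hinv - x^(n+1)*(x⁻¹)^(n+1)*h2
    have hx1 : x^(n+1) = 1 := sq_eq_one_char2 hpow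
    have hxm : x^(m+1) = 1 := by
      apply pow_two_pow_eq_one_char2 r
      rw [← pow_mul, mul_comm, ← hnm]
      exact hx1
    obtain ⟨i, hilt, hix⟩ := hθ.eq_pow_of_pow_eq_one hxm
    have hi0 : i ≠ 0 := by
      rintro rfl
      rw [pow_zero] at hix
      apply hc
      rw [← hix] at hxc
      linear_combination -hxc + h2
    by_cases hile : i ≤ m/2
    · exact ⟨i, by omega, hile, by rw [hix, hxc]⟩
    · refine ⟨m+1-i, by omega, by omega, ?_⟩
      have h1 : θ^(m+1-i) * θ^i = 1 := by
        rw [← pow_add, Nat.sub_add_cancel (by omega), hθ.pow_eq_one]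
      have hθi : θ^(m+1-i) = x⁻¹ := by
        rw [hix] at h1
        exact eq_inv_of_mul_eq_one_left h1
      rw [hθi, inv_inv, ← hxc]
      ring
  · rintro (rfl | ⟨i, hi1, hi2, rfl⟩)
    · exact pseq_zero hnodd
    · have hθ0 : θ ≠ 0 := hθ.ne_zero (by omega)
      set x := θ^i with hxdef
      have hx0 : x ≠ 0 := pow_ne_zero _ hθ0
      have hxy : x * x⁻¹ = 1 := mul_inv_cancel₀ hx0
      have hxm : x^(m+1) = 1 := by
        rw [hxdef, ← pow_mul, mul_comm, pow_mul, hθ.pow_eq_one, one_pow]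
      have hxn : x^(n+1) = 1 := by
        rw [hnm, mul_comm, pow_mul, hxm, one_pow]
      have hkey := pseq_key x hx0 n
      have h11 : (1:K) + 1 = 0 := by linear_combination h2
      rw [inv_pow, hxn, inv_one, h11] at hkey
      have hc0 : x + x⁻¹ ≠ 0 := by
        intro h
        have hx2 : x^2 = 1 := by linear_combination x*h - hxy - h2
        have hx1 : x = 1 := sq_eq_one_char2 hx2
        have hdvd := (hθ.pow_eq_one_iff_dvd i).mp (by rw [← hxdef]; exact hx1)
        have := Nat.le_of_dvd (by omega) hdvd
        omega
      exact (mul_eq_zero.mp hkey).resolve_left hc0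
end

/-- Characteristic 2, `b ≠ 0`, `n + 1 = 2^r (m+1)` with `r ≥ 1` and `m+1` odd:
`m` is even; if `m > 0` then `Ĉ_n(a,b)` is LCD (equivalently `1 + T̂_n(a,b)^2`
is invertible) iff `a/b ∉ {-1/b} ∪ {-1/b + θ^i + θ^{-i} : 1 ≤ i ≤ m/2}`;
if `m = 0` then `Ĉ_n(a,b)` is LCD iff `a ≠ 1`. -/
theorem stmt_18 (F : Type*) [Field F] [Fintype F] [CharP F 2]
    (n m r : ℕ) (hn : 2 ≤ n) (hr : 1 ≤ r)
    (hnm : n + 1 = 2 ^ r * (m + 1)) (hm : Odd (m + 1))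
    (a b : F) (hb : b ≠ 0)
    (θ : AlgebraicClosure F) (hθ : IsPrimitiveRoot θ (m + 1)) :
    Even m ∧
    (0 < m →
      (IsUnit ((1 : Matrix (Fin n) (Fin n) F) + (triToeplitz F n a b) ^ 2) ↔
        algebraMap F (AlgebraicClosure F) (a / b) ∉
          ({-(algebraMap F (AlgebraicClosure F) b)⁻¹} ∪
            (fun i : ℕ =>
              -(algebraMap F (AlgebraicClosure F) b)⁻¹ + θ ^ i + θ⁻¹ ^ i) ''
              (Set.Icc 1 (m / 2))))) ∧
    (m = 0 →
      (IsUnit ((1 : Matrix (Fin n) (Fin n) F) + (triToeplitz F n a b) ^ 2) ↔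
        a ≠ 1)) := by
  classical
  haveI : CharP (AlgebraicClosure F) 2 :=
    charP_of_injective_algebraMap (algebraMap F (AlgebraicClosure F)).injective 2
  have h2F : (2:F) = 0 := by
    have := CharP.cast_eq_zero F 2
    exact_mod_cast this
  set T := triToeplitz F n a b with hT
  have hTT : T + T = 0 := by
    ext i j
    simp only [Matrix.add_apply, Matrix.zero_apply]
    linear_combination (T i j) * h2F
  have hsq : (1 : Matrix (Fin n) (Fin n) F) + T^2 = (1 + T)^2 := by
    have h : (1 + T)^2 = 1 + (T + T) + T^2 := by noncomm_ring
    rw [h, hTT, add_zero]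
  have honeadd : (1 : Matrix (Fin n) (Fin n) F) + T = triToeplitz F n (1+a) b := by
    ext i j
    by_cases h : i = j
    · subst h; simp [Matrix.one_apply, triToeplitz, hT]
    · have hne : ¬ (i:ℕ) = (j:ℕ) := by simpa [Fin.ext_iff] using h
      simp [Matrix.one_apply, triToeplitz, h, hne, hT]
  set c : F := (1 + a)/b with hcdef
  have hUnit : IsUnit ((1 : Matrix (Fin n) (Fin n) F) + T^2) ↔ pseq c n ≠ 0 := by
    rw [hsq, honeadd, isUnit_pow_iff (by norm_num : (2:ℕ) ≠ 0),
      Matrix.isUnit_iff_isUnit_det, isUnit_iff_ne_zero]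
    exact not_congr (Matrix.exists_mulVec_eq_zero_iff.symm.trans
      (exists_kernel_iff hn (1+a) b hb))
  have hmap : pseq c n ≠ 0 ↔ pseq ((algebraMap F (AlgebraicClosure F)) c) n ≠ 0 := by
    simp only [← pseq_map (algebraMap F (AlgebraicClosure F)) c n, ne_eq, map_eq_zero]
  have hroot := pseq_root_iff n m r hr hnm hm θ hθ ((algebraMap F (AlgebraicClosure F)) c)
  have hBne : (algebraMap F (AlgebraicClosure F)) b ≠ 0 := by simpa [map_eq_zero] using hb
  have hc' : (algebraMap F (AlgebraicClosure F)) c = (algebraMap F (AlgebraicClosure F)) (a/b) + ((algebraMap F (AlgebraicClosure F)) b)⁻¹ := by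
    rw [hcdef, map_div₀, map_div₀, map_add, map_one]
    field_simp
    ring
  refine ⟨?_, ?_, ?_⟩
  · obtain ⟨t, ht⟩ := id hm
    exact ⟨t, by omega⟩
  · intro _
    rw [hUnit, hmap, ne_eq, hroot]
    apply not_congr
    simp only [Set.mem_union, Set.mem_singleton_iff, Set.mem_image, Set.mem_Icc]
    apply or_congr
    · rw [hc']
      constructor <;> intro h <;> linear_combination h
    · constructor
      · rintro ⟨i, h1, h2, heq⟩
        refine ⟨i, ⟨h1, h2⟩, ?_⟩
        rw [hc'] at heq
        linear_combination -heq
      · rintro ⟨i, ⟨h1, h2⟩, heq⟩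
        refine ⟨i, h1, h2, ?_⟩
        rw [hc']
        linear_combination -heq
  · intro hm0
    subst hm0
    rw [hUnit, hmap, ne_eq, hroot]
    have hempty : ¬ ∃ i, 1 ≤ i ∧ i ≤ 0/2 ∧ (algebraMap F (AlgebraicClosure F)) c = θ^i + (θ^i)⁻¹ := by
      rintro ⟨i, h1, h2, _⟩; omega
    constructor
    · intro h ha
      apply h
      left
      rw [map_eq_zero, hcdef, ha, div_eq_zero_iff]
      left
      linear_combination h2F
    · intro ha h
      rcases h with h | h
      · apply ha
        rw [map_eq_zero, hcdef, div_eq_zero_iff] at h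
        have h' := h.resolve_right hb
        linear_combination h' - h2F
      · exact hempty h
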